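/- Let m ≥ 3 be an integer, A⁻¹ = [[0,0,1],[1,0,−2m],[0,1,−m²]] and B⁻¹ = [[0,0,1],[1,0,−2(m+1)],[0,1,−(m+1)²]]. Then for every nonzero vector x in the cone 𝒞, one has ‖A⁻¹x‖₁/‖x‖₁ ≥ (m⁴+2m³−5m)/(m²+6m+1) and ‖B⁻¹x‖₁/‖x‖₁ ≥ (m⁴+4m³+3m²−7m−3)/(m²+6m+1), where ‖·‖₁ is the ℓ¹ norm on ℝ³. -/
import Mathlib


open Matrix

noncomputable section

/-- `A⁻¹ = [[0,0,1],[1,0,−2m],[0,1,−m²]]`, the inverse of `A = [[2m,1,0],[m²,0,1],[1,0,0]]`. -/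
def Ainv (m : ℤ) : Matrix (Fin 3) (Fin 3) ℝ :=
  !![0, 0, 1; 1, 0, -2 * (m : ℝ); 0, 1, -(m : ℝ) ^ 2]

/-- `B⁻¹ = [[0,0,1],[1,0,−2(m+1)],[0,1,−(m+1)²]]`, the inverse of
`B = [[2(m+1),1,0],[(m+1)²,0,1],[1,0,0]]`. -/
def Binv (m : ℤ) : Matrix (Fin 3) (Fin 3) ℝ :=
  !![0, 0, 1; 1, 0, -2 * ((m : ℝ) + 1); 0, 1, -((m : ℝ) + 1) ^ 2]

/-- The cone `𝒞`: the zero vector together with all `(x₁,x₂,x₃)` with `x₁ ≠ 0`,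
`−3m ≤ x₂/x₁ ≤ −2m` and `−m²−3m ≤ x₃/x₁ ≤ −m²+1`. -/
def coneC (m : ℤ) : Set (Fin 3 → ℝ) :=
  {x | x = 0 ∨ (x 0 ≠ 0 ∧
    -3 * (m : ℝ) ≤ x 1 / x 0 ∧ x 1 / x 0 ≤ -2 * (m : ℝ) ∧
    -(m : ℝ) ^ 2 - 3 * (m : ℝ) ≤ x 2 / x 0 ∧ x 2 / x 0 ≤ -(m : ℝ) ^ 2 + 1)}

/-- The `ℓ¹` norm on `ℝ³`. -/
def l1 (x : Fin 3 → ℝ) : ℝ := |x 0| + |x 1| + |x 2|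

lemma keyA (c a b : ℝ) (hc : 3 ≤ c) (h1 : -3*c ≤ a) (h2 : a ≤ -2*c)
    (h3 : -c^2-3*c ≤ b) (h4 : b ≤ -c^2+1) :
    (c^4+2*c^3-5*c)/(c^2+6*c+1) ≤ (1 + a - (c^2+2*c+1)*b)/(1-a-b) := by
  have hD : (0:ℝ) < 1 - a - b := by nlinarith
  have hQ : (0:ℝ) < c^2+6*c+1 := by nlinarith
  rw [div_le_div_iff₀ hQ hD]
  nlinarith [mul_nonneg (by nlinarith : (0:ℝ) ≤ (c^2+6*c+1) + (c^4+2*c^3-5*c)) (by linarith : (0:ℝ) ≤ a + 3*c),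
    mul_nonneg (by nlinarith : (0:ℝ) ≤ (c^2+2*c+1)*(c^2+6*c+1) - (c^4+2*c^3-5*c)) (by linarith : (0:ℝ) ≤ -c^2+1 - b),
    mul_nonneg (by nlinarith : (0:ℝ) ≤ c^4+2*c^3-5*c) (by linarith : (0:ℝ) ≤ 3*c+1)]

lemma keyB (c a b : ℝ) (hc : 3 ≤ c) (h1 : -3*c ≤ a) (h2 : a ≤ -2*c)
    (h3 : -c^2-3*c ≤ b) (h4 : b ≤ -c^2+1) :
    (c^4+4*c^3+3*c^2-7*c-3)/(c^2+6*c+1) ≤ (1 + a - (c^2+4*c+4)*b)/(1-a-b) := by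
  have hD : (0:ℝ) < 1 - a - b := by nlinarith
  have hQ : (0:ℝ) < c^2+6*c+1 := by nlinarith
  rw [div_le_div_iff₀ hQ hD]
  nlinarith [mul_nonneg (by nlinarith : (0:ℝ) ≤ (c^2+6*c+1) + (c^4+4*c^3+3*c^2-7*c-3)) (by linarith : (0:ℝ) ≤ a + 3*c),
    mul_nonneg (by nlinarith : (0:ℝ) ≤ (c^2+4*c+4)*(c^2+6*c+1) - (c^4+4*c^3+3*c^2-7*c-3)) (by linarith : (0:ℝ) ≤ -c^2+1 - b),
    mul_nonneg (by nlinarith : (0:ℝ) ≤ c^4+4*c^3+3*c^2-7*c-3) (by linarith : (0:ℝ) ≤ 3*c+1)]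

/-- For `m ≥ 3` and every nonzero vector `x` of the cone `𝒞`:
`‖A⁻¹x‖₁/‖x‖₁ ≥ (m⁴+2m³−5m)/(m²+6m+1)` and `‖B⁻¹x‖₁/‖x‖₁ ≥ (m⁴+4m³+3m²−7m−3)/(m²+6m+1)`. -/
theorem stmt18 (m : ℤ) (hm : 3 ≤ m) (x : Fin 3 → ℝ) (hx : x ∈ coneC m) (hx0 : x ≠ 0) :
    ((m : ℝ) ^ 4 + 2 * (m : ℝ) ^ 3 - 5 * (m : ℝ)) / ((m : ℝ) ^ 2 + 6 * (m : ℝ) + 1) ≤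
      l1 ((Ainv m).mulVec x) / l1 x ∧
    ((m : ℝ) ^ 4 + 4 * (m : ℝ) ^ 3 + 3 * (m : ℝ) ^ 2 - 7 * (m : ℝ) - 3) /
        ((m : ℝ) ^ 2 + 6 * (m : ℝ) + 1) ≤
      l1 ((Binv m).mulVec x) / l1 x := by
  obtain hz | ⟨h0, h1, h2, h3, h4⟩ := hx
  · exact absurd hz hx0
  set c : ℝ := (m : ℝ) with hcdef
  have hc : (3:ℝ) ≤ c := by rw [hcdef]; exact_mod_cast hm
  set a : ℝ := x 1 / x 0 with ha
  set b : ℝ := x 2 / x 0 with hb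
  have hx1 : x 1 = a * x 0 := (div_mul_cancel₀ _ h0).symm
  have hx2 : x 2 = b * x 0 := (div_mul_cancel₀ _ h0).symm
  have hapos : a < 0 := by nlinarith
  have hbpos : b < 0 := by nlinarith
  have hX0 : (0:ℝ) < |x 0| := abs_pos.mpr h0
  -- l1 x
  have hl1x : l1 x = |x 0| * (1 - a - b) := by
    rw [l1, hx1, hx2, abs_mul, abs_mul, abs_of_neg hapos, abs_of_neg hbpos]; ring
  -- A part
  have hA0 : ((Ainv m).mulVec x) 0 = b * x 0 := by
    simp [Ainv, Matrix.mulVec, dotProduct, Fin.sum_univ_three, hx2]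
  have hA1 : ((Ainv m).mulVec x) 1 = (1 - 2*c*b) * x 0 := by
    simp [Ainv, Matrix.mulVec, dotProduct, Fin.sum_univ_three, hx2]; ring
  have hA2 : ((Ainv m).mulVec x) 2 = (a - c^2*b) * x 0 := by
    simp [Ainv, Matrix.mulVec, dotProduct, Fin.sum_univ_three, hx1, hx2]; ring
  have hB0 : ((Binv m).mulVec x) 0 = b * x 0 := by
    simp [Binv, Matrix.mulVec, dotProduct, Fin.sum_univ_three, hx2]
  have hB1 : ((Binv m).mulVec x) 1 = (1 - 2*(c+1)*b) * x 0 := by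
    simp [Binv, Matrix.mulVec, dotProduct, Fin.sum_univ_three, hx2]; ring
  have hB2 : ((Binv m).mulVec x) 2 = (a - (c+1)^2*b) * x 0 := by
    simp [Binv, Matrix.mulVec, dotProduct, Fin.sum_univ_three, hx1, hx2]; ring
  have hs1 : (0:ℝ) < 1 - 2*c*b := by nlinarith
  have hs2 : (0:ℝ) < a - c^2*b := by nlinarith
  have hs3 : (0:ℝ) < 1 - 2*(c+1)*b := by nlinarith
  have hs4 : (0:ℝ) < a - (c+1)^2*b := by nlinarith
  have hl1A : l1 ((Ainv m).mulVec x) = |x 0| * (1 + a - (c^2+2*c+1)*b) := by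
    rw [l1, hA0, hA1, hA2, abs_mul, abs_mul, abs_mul, abs_of_neg hbpos,
      abs_of_pos hs1, abs_of_pos hs2]; ring
  have hl1B : l1 ((Binv m).mulVec x) = |x 0| * (1 + a - (c^2+4*c+4)*b) := by
    rw [l1, hB0, hB1, hB2, abs_mul, abs_mul, abs_mul, abs_of_neg hbpos,
      abs_of_pos hs3, abs_of_pos hs4]; ring
  rw [hl1x, hl1A, hl1B, mul_div_mul_left _ _ (ne_of_gt hX0),
    mul_div_mul_left _ _ (ne_of_gt hX0)]
  constructor
  · have := keyA c a b hc h1 h2 h3 h4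
    linarith
  · have := keyB c a b hc h1 h2 h3 h4
    linarith
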